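/- arXiv:2104.11322 — 6 statements merged into one kernel-verified Lean document; each statement's English description precedes it below -/
import Mathlib

section
/- Let ϑ ∈ ℝ and let g₁, g₂ : (0,∞) → ℝ be differentiable. Define the micro-distortion field P : {x ∈ ℝ³ : x₁²+x₂² > 0} → ℝ^{3×3} by P(x) = ϑ·[[0, −x₃, −g₂(r)x₂], [x₃, 0, g₂(r)x₁], [g₁(r)x₂, −g₁(r)x₁, 0]] where r = √(x₁²+x₂²). Then the row-wise Curl of P is given by Curl P(x) = ϑ·[[1 − g₂(r) − g₂′(r)x₂²/r, g₂′(r)x₁x₂/r, 0], [g₂′(r)x₁x₂/r, 1 − g₂(r) − g₂′(r)x₁²/r, 0], [0, 0, −(2g₁(r) + r·g₁′(r))]]; in particular Curl P(x) is a symmetric matrix, i.e. skew(Curl P) = 0. -/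
open Matrix MeasureTheory Real Filter Asymptotics

noncomputable section

abbrev Mat3 := Matrix (Fin 3) (Fin 3) ℝ

/-- Partial derivative of a scalar field in the `j`-th coordinate direction. -/
def pd (j : Fin 3) (f : (Fin 3 → ℝ) → ℝ) (x : Fin 3 → ℝ) : ℝ :=
  fderiv ℝ f x (Pi.single j 1)

/-- Jacobian matrix (Du)ᵢⱼ = ∂uᵢ/∂xⱼ of a vector field. -/
def jac (u : (Fin 3 → ℝ) → Fin 3 → ℝ) (x : Fin 3 → ℝ) : Mat3 :=
  Matrix.of fun i j => pd j (fun y => u y i) x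

/-- Symmetric part of a matrix. -/
def symm3 (P : Mat3) : Mat3 := (1/2 : ℝ) • (P + Pᵀ)

/-- Skew-symmetric part of a matrix. -/
def skew3 (P : Mat3) : Mat3 := (1/2 : ℝ) • (P - Pᵀ)

/-- Deviatoric part of a matrix. -/
def dev3 (P : Mat3) : Mat3 := P - (Matrix.trace P / 3) • (1 : Mat3)

/-- Squared Frobenius norm. -/
def frob2 (P : Mat3) : ℝ := ∑ i, ∑ j, (P i j)^2

/-- Frobenius inner product. -/
def frobInner (P Q : Mat3) : ℝ := ∑ i, ∑ j, P i j * Q i j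

/-- Row-wise divergence of a matrix field. -/
def matDiv (σ : (Fin 3 → ℝ) → Mat3) (x : Fin 3 → ℝ) : Fin 3 → ℝ :=
  fun i => ∑ j, pd j (fun y => σ y i j) x

/-- Curl of a vector field. -/
def curl3 (v : (Fin 3 → ℝ) → Fin 3 → ℝ) (x : Fin 3 → ℝ) : Fin 3 → ℝ :=
  ![pd 1 (fun y => v y 2) x - pd 2 (fun y => v y 1) x,
    pd 2 (fun y => v y 0) x - pd 0 (fun y => v y 2) x,
    pd 0 (fun y => v y 1) x - pd 1 (fun y => v y 0) x]

/-- Row-wise Curl of a matrix field. -/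
def matCurl (P : (Fin 3 → ℝ) → Mat3) (x : Fin 3 → ℝ) : Mat3 :=
  Matrix.of fun i => curl3 (fun y => P y i) x

/-- The torsion displacement field u(x) = ϑ·(−x₂x₃, x₁x₃, 0). -/
def torsionU (ϑ : ℝ) (x : Fin 3 → ℝ) : Fin 3 → ℝ :=
  ![-(ϑ * x 1 * x 2), ϑ * x 0 * x 2, 0]

/-- The micro-distortion ansatz for the torsion problem. -/
def microP (ϑ : ℝ) (g₁ g₂ : ℝ → ℝ) (x : Fin 3 → ℝ) : Mat3 :=
  Matrix.of
    ![![0, -(ϑ * x 2), -(ϑ * g₂ (Real.sqrt (x 0 ^ 2 + x 1 ^ 2)) * x 1)],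
      ![ϑ * x 2, 0, ϑ * g₂ (Real.sqrt (x 0 ^ 2 + x 1 ^ 2)) * x 0],
      ![ϑ * g₁ (Real.sqrt (x 0 ^ 2 + x 1 ^ 2)) * x 1,
        -(ϑ * g₁ (Real.sqrt (x 0 ^ 2 + x 1 ^ 2)) * x 0), 0]]

set_option maxHeartbeats 2000000
lemma pd_hasFDeriv {f : (Fin 3 → ℝ) → ℝ} {L : (Fin 3 → ℝ) →L[ℝ] ℝ} {x : Fin 3 → ℝ}
    (h : HasFDerivAt f L x) (j : Fin 3) : pd j f x = L (Pi.single j 1) := by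
  rw [pd, h.fderiv]

lemma pd_zero (j : Fin 3) (x : Fin 3 → ℝ) : pd j (fun _ => (0:ℝ)) x = 0 := by
  simp [pd, fderiv_const]

lemma pd_neg (j : Fin 3) (f : (Fin 3 → ℝ) → ℝ) (x : Fin 3 → ℝ) :
    pd j (fun y => -(f y)) x = -pd j f x := by
  simp [pd, fderiv_neg]

lemma pd_lin (c : ℝ) (k j : Fin 3) (x : Fin 3 → ℝ) :
    pd j (fun y => c * y k) x = if k = j then c else 0 := by
  have h : HasFDerivAt (fun y : Fin 3 → ℝ => c * y k)
      (c • ContinuousLinearMap.proj (R := ℝ) (φ := fun _ : Fin 3 => ℝ) k) x := by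
    exact ((ContinuousLinearMap.proj (R := ℝ) (φ := fun _ : Fin 3 => ℝ) k).hasFDerivAt).const_mul c
  rw [pd_hasFDeriv h]
  simp [Pi.single_apply]

lemma pd_gr (c : ℝ) (g : ℝ → ℝ) (x : Fin 3 → ℝ) (hx : 0 < x 0 ^ 2 + x 1 ^ 2)
    (hg : DifferentiableAt ℝ g (Real.sqrt (x 0 ^ 2 + x 1 ^ 2))) (k j : Fin 3) :
    pd j (fun y => c * g (Real.sqrt (y 0 ^ 2 + y 1 ^ 2)) * y k) x =
      c * deriv g (Real.sqrt (x 0 ^ 2 + x 1 ^ 2)) *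
        (![x 0, x 1, 0] j / Real.sqrt (x 0 ^ 2 + x 1 ^ 2)) * x k
      + (if k = j then c * g (Real.sqrt (x 0 ^ 2 + x 1 ^ 2)) else 0) := by
  have hr : (0:ℝ) < Real.sqrt (x 0 ^ 2 + x 1 ^ 2) := Real.sqrt_pos.2 hx
  have h0 : HasFDerivAt (fun y : Fin 3 → ℝ => y 0)
      (ContinuousLinearMap.proj (R := ℝ) (φ := fun _ : Fin 3 => ℝ) 0) x := by
    exact (ContinuousLinearMap.proj (R := ℝ) (φ := fun _ : Fin 3 => ℝ) 0).hasFDerivAt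
  have h1 : HasFDerivAt (fun y : Fin 3 → ℝ => y 1)
      (ContinuousLinearMap.proj (R := ℝ) (φ := fun _ : Fin 3 => ℝ) 1) x := by
    exact (ContinuousLinearMap.proj (R := ℝ) (φ := fun _ : Fin 3 => ℝ) 1).hasFDerivAt
  have hs : HasFDerivAt (fun y : Fin 3 → ℝ => y 0 ^ 2 + y 1 ^ 2)
      ((2 * x 0) • ContinuousLinearMap.proj (R := ℝ) (φ := fun _ : Fin 3 => ℝ) 0 +
       (2 * x 1) • ContinuousLinearMap.proj (R := ℝ) (φ := fun _ : Fin 3 => ℝ) 1) x := by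
    rw [show (fun y : Fin 3 → ℝ => y 0 ^ 2 + y 1 ^ 2) = ((fun y : Fin 3 → ℝ => y 0) * fun y => y 0) + (fun y : Fin 3 → ℝ => y 1) * fun y => y 1 by funext y; simp [pow_two]]
    simpa [two_mul, add_smul] using (h0.mul h0).add (h1.mul h1)
  have hsqrt : HasDerivAt Real.sqrt (1 / (2 * Real.sqrt (x 0 ^ 2 + x 1 ^ 2)))
      (x 0 ^ 2 + x 1 ^ 2) := Real.hasDerivAt_sqrt (ne_of_gt hx)
  have hrf := hsqrt.comp_hasFDerivAt x hs
  have hgr := (hg.hasDerivAt).comp_hasFDerivAt x hrf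
  have hk : HasFDerivAt (fun y : Fin 3 → ℝ => y k)
      (ContinuousLinearMap.proj (R := ℝ) (φ := fun _ : Fin 3 => ℝ) k) x := by
    exact (ContinuousLinearMap.proj (R := ℝ) (φ := fun _ : Fin 3 => ℝ) k).hasFDerivAt
  have hmul := (hgr.const_mul c).mul hk
  rw [pd_hasFDeriv (show HasFDerivAt
      (fun y : Fin 3 → ℝ => c * g (Real.sqrt (y 0 ^ 2 + y 1 ^ 2)) * y k) _ x from hmul)]
  have hrne : Real.sqrt (x 0 ^ 2 + x 1 ^ 2) ≠ 0 := ne_of_gt hr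
  simp only [ContinuousLinearMap.add_apply, ContinuousLinearMap.smul_apply,
    ContinuousLinearMap.proj_apply, Function.comp_apply, smul_eq_mul, Pi.single_apply]
  fin_cases j <;> fin_cases k <;>
    simp only [Fin.isValue, Matrix.cons_val_zero, Matrix.cons_val_one, Matrix.head_cons,
      Matrix.cons_val_two, Matrix.tail_cons, if_true, if_false, Fin.mk_zero, Fin.mk_one,
      reduceIte, Fin.reduceEq, mul_one, mul_zero, add_zero, zero_add] <;>
    simp [Fin.ext_iff] <;> field_simp <;> ring


/-- the row-wise Curl of the torsion micro-distortion ansatz, and its symmetry. -/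
theorem curl_of_torsion_microdistortion (ϑ : ℝ) (g₁ g₂ : ℝ → ℝ)
    (hg₁ : ∀ r : ℝ, 0 < r → DifferentiableAt ℝ g₁ r)
    (hg₂ : ∀ r : ℝ, 0 < r → DifferentiableAt ℝ g₂ r) :
    ∀ x : Fin 3 → ℝ, 0 < x 0 ^ 2 + x 1 ^ 2 →
      matCurl (microP ϑ g₁ g₂) x =
        ϑ • Matrix.of
          ![![1 - g₂ (Real.sqrt (x 0 ^ 2 + x 1 ^ 2))
                - deriv g₂ (Real.sqrt (x 0 ^ 2 + x 1 ^ 2)) * (x 1) ^ 2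
                    / Real.sqrt (x 0 ^ 2 + x 1 ^ 2),
              deriv g₂ (Real.sqrt (x 0 ^ 2 + x 1 ^ 2)) * x 0 * x 1
                / Real.sqrt (x 0 ^ 2 + x 1 ^ 2), 0],
            ![deriv g₂ (Real.sqrt (x 0 ^ 2 + x 1 ^ 2)) * x 0 * x 1
                / Real.sqrt (x 0 ^ 2 + x 1 ^ 2),
              1 - g₂ (Real.sqrt (x 0 ^ 2 + x 1 ^ 2))
                - deriv g₂ (Real.sqrt (x 0 ^ 2 + x 1 ^ 2)) * (x 0) ^ 2
                    / Real.sqrt (x 0 ^ 2 + x 1 ^ 2), 0],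
            ![0, 0, -(2 * g₁ (Real.sqrt (x 0 ^ 2 + x 1 ^ 2))
                + Real.sqrt (x 0 ^ 2 + x 1 ^ 2)
                    * deriv g₁ (Real.sqrt (x 0 ^ 2 + x 1 ^ 2)))]] ∧
      skew3 (matCurl (microP ϑ g₁ g₂) x) = 0 := by
  intro x hx
  have hr : (0:ℝ) < Real.sqrt (x 0 ^ 2 + x 1 ^ 2) := Real.sqrt_pos.2 hx
  have hrne : Real.sqrt (x 0 ^ 2 + x 1 ^ 2) ≠ 0 := ne_of_gt hr
  have hrr : Real.sqrt (x 0 ^ 2 + x 1 ^ 2) * Real.sqrt (x 0 ^ 2 + x 1 ^ 2)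
      = x 0 ^ 2 + x 1 ^ 2 := Real.mul_self_sqrt (le_of_lt hx)
  have h1 := hg₁ _ hr
  have h2 := hg₂ _ hr
  have key : matCurl (microP ϑ g₁ g₂) x =
        ϑ • Matrix.of
          ![![1 - g₂ (Real.sqrt (x 0 ^ 2 + x 1 ^ 2))
                - deriv g₂ (Real.sqrt (x 0 ^ 2 + x 1 ^ 2)) * (x 1) ^ 2
                    / Real.sqrt (x 0 ^ 2 + x 1 ^ 2),
              deriv g₂ (Real.sqrt (x 0 ^ 2 + x 1 ^ 2)) * x 0 * x 1
                / Real.sqrt (x 0 ^ 2 + x 1 ^ 2), 0],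
            ![deriv g₂ (Real.sqrt (x 0 ^ 2 + x 1 ^ 2)) * x 0 * x 1
                / Real.sqrt (x 0 ^ 2 + x 1 ^ 2),
              1 - g₂ (Real.sqrt (x 0 ^ 2 + x 1 ^ 2))
                - deriv g₂ (Real.sqrt (x 0 ^ 2 + x 1 ^ 2)) * (x 0) ^ 2
                    / Real.sqrt (x 0 ^ 2 + x 1 ^ 2), 0],
            ![0, 0, -(2 * g₁ (Real.sqrt (x 0 ^ 2 + x 1 ^ 2))
                + Real.sqrt (x 0 ^ 2 + x 1 ^ 2)
                    * deriv g₁ (Real.sqrt (x 0 ^ 2 + x 1 ^ 2)))]] := by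
    ext i j
    fin_cases i <;> fin_cases j
    all_goals try simp only [matCurl, curl3, microP, Matrix.of_apply, Matrix.cons_val',
        Matrix.cons_val_zero, Matrix.cons_val_one, Matrix.head_cons, Matrix.cons_val_two,
        Matrix.tail_cons, Matrix.empty_val', Matrix.cons_val_fin_one, Matrix.head_fin_const,
        Matrix.smul_apply, smul_eq_mul, Fin.isValue, Fin.mk_zero, Fin.mk_one, Fin.reduceFinMk]
    all_goals try simp only [pd_zero, pd_neg, pd_lin,
        pd_gr ϑ g₁ x hx h1, pd_gr ϑ g₂ x hx h2]
    all_goals try simp [Fin.ext_iff]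
    all_goals try field_simp
    all_goals try ring
    all_goals try (linear_combination (ϑ * deriv g₁ (Real.sqrt (x 0 ^ 2 + x 1 ^ 2))) * hrr)
    all_goals try (linear_combination (-(ϑ * deriv g₁ (Real.sqrt (x 0 ^ 2 + x 1 ^ 2)))) * hrr)
  refine ⟨key, ?_⟩
  have hsymm : (matCurl (microP ϑ g₁ g₂) x)ᵀ = matCurl (microP ϑ g₁ g₂) x := by
    rw [key]
    ext i j
    fin_cases i <;> fin_cases j <;> rfl
  rw [skew3, hsymm, sub_self, smul_zero]
end
end

section
/- Define I₁ : ℝ → ℝ by I₁(x) = ∫₀^π e^{x cos τ} cos τ dτ (the modified Bessel function of the first kind of order one, up to normalization). Then I₁ is twice differentiable on ℝ and satisfies the modified Bessel differential equation of order one: x²·I₁″(x) + x·I₁′(x) − (x² + 1)·I₁(x) = 0 for every x ∈ ℝ. -/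
open Real intervalIntegral

noncomputable section

/-- The modified Bessel function of the first kind of order one, up to normalization:
I₁(x) = ∫₀^π e^{x cos τ} cos τ dτ. -/
def besselI1 (x : ℝ) : ℝ := ∫ τ in (0:ℝ)..π, Real.exp (x * Real.cos τ) * Real.cos τ

open MeasureTheory Metric in
lemma cont_aux (n : ℕ) (x : ℝ) :
    Continuous (fun τ : ℝ => Real.exp (x * Real.cos τ) * (Real.cos τ)^n) := by
  fun_prop

open MeasureTheory Metric in
lemma hasDeriv_aux (n : ℕ) (x : ℝ) :
    HasDerivAt (fun y : ℝ => ∫ τ in (0:ℝ)..π, Real.exp (y * Real.cos τ) * (Real.cos τ)^n)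
      (∫ τ in (0:ℝ)..π, Real.exp (x * Real.cos τ) * (Real.cos τ)^(n+1)) x := by
  have key := intervalIntegral.hasDerivAt_integral_of_dominated_loc_of_deriv_le
    (F := fun y τ => Real.exp (y * Real.cos τ) * (Real.cos τ)^n)
    (F' := fun y τ => Real.exp (y * Real.cos τ) * (Real.cos τ)^(n+1))
    (x₀ := x) (a := 0) (b := π) (μ := volume) (bound := fun _ => Real.exp (|x| + 1))
    (ball_mem_nhds x (by norm_num : (0:ℝ) < 1))
    ?_ ?_ ?_ ?_ ?_ ?_
  · exact key.2
  · filter_upwards with y using ((cont_aux n y).aestronglyMeasurable).restrict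
  · exact ((cont_aux n x)).intervalIntegrable 0 π
  · exact ((cont_aux (n+1) x)).aestronglyMeasurable.restrict
  · filter_upwards with τ _ y hy
    have h1 : |y * Real.cos τ| ≤ |x| + 1 := by
      have hy' : |y - x| < 1 := by simpa [Real.dist_eq] using mem_ball.mp hy
      have hya : |y| ≤ |x| + 1 := by
        have := abs_sub_abs_le_abs_sub y x
        linarith
      calc |y * Real.cos τ| = |y| * |Real.cos τ| := abs_mul _ _
        _ ≤ (|x| + 1) * 1 :=
            mul_le_mul hya (abs_cos_le_one τ) (abs_nonneg _) (by positivity)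
        _ = |x| + 1 := by ring
    have h2 : |(Real.cos τ)^(n+1)| ≤ 1 := by
      rw [abs_pow]; exact pow_le_one₀ (abs_nonneg _) (abs_cos_le_one τ)
    calc ‖Real.exp (y * Real.cos τ) * (Real.cos τ)^(n+1)‖
        = Real.exp (y * Real.cos τ) * |(Real.cos τ)^(n+1)| := by
          rw [norm_mul, Real.norm_eq_abs, Real.norm_eq_abs, abs_exp]
      _ ≤ Real.exp (|x| + 1) * 1 := by
          apply mul_le_mul _ h2 (abs_nonneg _) (Real.exp_pos _).le
          exact Real.exp_le_exp.mpr (le_trans (le_abs_self _) h1)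
      _ = Real.exp (|x| + 1) := by ring
  · exact (continuous_const).intervalIntegrable 0 π
  · filter_upwards with τ _ y _
    have h : HasDerivAt (fun y : ℝ => y * Real.cos τ) (Real.cos τ) y := by
      simpa using (hasDerivAt_id y).mul_const (Real.cos τ)
    have := (h.exp).mul_const ((Real.cos τ)^n)
    exact this.congr_deriv (by ring)

lemma besselI1_eq :
    besselI1 = fun x : ℝ => ∫ τ in (0:ℝ)..π, Real.exp (x * Real.cos τ) * (Real.cos τ)^1 := by
  funext x
  simp [besselI1]

lemma deriv_besselI1 :
    deriv besselI1 = fun x : ℝ => ∫ τ in (0:ℝ)..π, Real.exp (x * Real.cos τ) * (Real.cos τ)^2 := by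
  funext x
  rw [besselI1_eq]
  exact (hasDeriv_aux 1 x).deriv

lemma diff_besselI1 (x : ℝ) : DifferentiableAt ℝ besselI1 x := by
  rw [besselI1_eq]; exact (hasDeriv_aux 1 x).differentiableAt

lemma diff_deriv_besselI1 (x : ℝ) : DifferentiableAt ℝ (deriv besselI1) x := by
  rw [deriv_besselI1]; exact (hasDeriv_aux 2 x).differentiableAt

lemma deriv2_besselI1 (x : ℝ) :
    deriv (deriv besselI1) x = ∫ τ in (0:ℝ)..π, Real.exp (x * Real.cos τ) * (Real.cos τ)^3 := by
  rw [deriv_besselI1]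
  exact (hasDeriv_aux 2 x).deriv

open MeasureTheory in
/-- besselI1 is twice differentiable and satisfies the modified Bessel
differential equation of order one. -/
theorem besselI1_ode :
    (∀ x : ℝ, DifferentiableAt ℝ besselI1 x ∧ DifferentiableAt ℝ (deriv besselI1) x) ∧
    (∀ x : ℝ,
      x ^ 2 * deriv (deriv besselI1) x + x * deriv besselI1 x
        - (x ^ 2 + 1) * besselI1 x = 0) := by
  constructor
  · exact fun x => ⟨diff_besselI1 x, diff_deriv_besselI1 x⟩
  · intro x
    rw [deriv2_besselI1, deriv_besselI1, besselI1_eq]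
    have h1 : IntervalIntegrable (fun τ : ℝ => Real.exp (x * Real.cos τ) * (Real.cos τ)^1) volume 0 π := (cont_aux 1 x).intervalIntegrable 0 π
    have h2 : IntervalIntegrable (fun τ : ℝ => Real.exp (x * Real.cos τ) * (Real.cos τ)^2) volume 0 π := (cont_aux 2 x).intervalIntegrable 0 π
    have h3 : IntervalIntegrable (fun τ : ℝ => Real.exp (x * Real.cos τ) * (Real.cos τ)^3) volume 0 π := (cont_aux 3 x).intervalIntegrable 0 π
    rw [← intervalIntegral.integral_const_mul, ← intervalIntegral.integral_const_mul,
      ← intervalIntegral.integral_const_mul,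
      ← intervalIntegral.integral_add (h3.const_mul _) (h2.const_mul _),
      ← intervalIntegral.integral_sub (((h3.const_mul _).add (h2.const_mul _))) (h1.const_mul _)]
    have key : ∀ τ ∈ Set.uIcc (0:ℝ) π,
        HasDerivAt (fun τ : ℝ => Real.exp (x * Real.cos τ) * (x * Real.sin τ * Real.cos τ - Real.sin τ))
          (x ^ 2 * (Real.exp (x * Real.cos τ) * Real.cos τ ^ 3)
            + x * (Real.exp (x * Real.cos τ) * Real.cos τ ^ 2)
            - (x ^ 2 + 1) * (Real.exp (x * Real.cos τ) * Real.cos τ ^ 1)) τ := by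
      intro τ _
      have hc : HasDerivAt (fun τ : ℝ => x * Real.cos τ) (x * (-Real.sin τ)) τ :=
        (Real.hasDerivAt_cos τ).const_mul x
      have he := hc.exp
      have hs : HasDerivAt (fun τ : ℝ => x * Real.sin τ * Real.cos τ - Real.sin τ)
          (x * (Real.cos τ * Real.cos τ) + x * Real.sin τ * (-Real.sin τ) - Real.cos τ) τ := by
        have := (((Real.hasDerivAt_sin τ).const_mul x).mul (Real.hasDerivAt_cos τ)).sub
          (Real.hasDerivAt_sin τ)
        exact this.congr_deriv (by ring)
      have := he.mul hs
      refine this.congr_deriv ?_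
      have hsq : Real.sin τ ^ 2 = 1 - Real.cos τ ^ 2 := Real.sin_sq τ
      linear_combination -(Real.exp (x * Real.cos τ) * x ^ 2 * Real.cos τ) * hsq
    rw [intervalIntegral.integral_eq_sub_of_hasDerivAt key ?_]
    · simp
    · apply Continuous.intervalIntegrable
      fun_prop
end
end

section
/- Let μ > 0, L_c > 0, μ_c > 0, a₁ > 0, a₃ > 0 and set f₁ = √(6μ_c/((a₁+2a₃)μ)). Define I₁(x) = ∫₀^π e^{x cos τ} cos τ dτ. Then for every constant A ∈ ℝ, the function g_p : (0,∞) → ℝ, g_p(r) = 1 + A·I₁(f₁·r/L_c)/r, is twice differentiable and solves the Cosserat torsion equilibrium equation 6rμ_c(g_p(r) − 1) − μL_c²(a₁+2a₃)(3g_p′(r) + r·g_p″(r)) = 0 for every r > 0. -/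
open Real intervalIntegral

noncomputable section

open MeasureTheory

def besselAux (n : ℕ) (x : ℝ) : ℝ := ∫ τ in (0:ℝ)..π, Real.exp (x * Real.cos τ) * (Real.cos τ) ^ n

lemma besselAux_cont (n : ℕ) (y : ℝ) : Continuous (fun τ : ℝ => Real.exp (y * Real.cos τ) * Real.cos τ ^ n) := by
  fun_prop

lemma hasDerivAt_besselAux (n : ℕ) (x : ℝ) :
    HasDerivAt (besselAux n) (besselAux (n+1) x) x := by
  have key := intervalIntegral.hasDerivAt_integral_of_dominated_loc_of_deriv_le
    (F := fun y τ => Real.exp (y * Real.cos τ) * Real.cos τ ^ n)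
    (F' := fun y τ => Real.exp (y * Real.cos τ) * Real.cos τ ^ (n+1))
    (x₀ := x) (a := 0) (b := π) (μ := volume) (bound := fun _ => Real.exp (|x| + 1))
    (Metric.ball_mem_nhds x one_pos)
    (Filter.Eventually.of_forall fun y => ((besselAux_cont n y).aestronglyMeasurable))
    (((besselAux_cont n x)).intervalIntegrable 0 π)
    (((besselAux_cont (n+1) x)).aestronglyMeasurable)
    ?_ (intervalIntegrable_const) ?_
  · exact key.2
  · refine Filter.Eventually.of_forall fun t _ y hy => ?_
    have hyx : |y| ≤ |x| + 1 := by
      have := abs_sub_abs_le_abs_sub y x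
      have h2 : |y - x| < 1 := by simpa [Metric.mem_ball, Real.dist_eq] using hy
      linarith
    have hct : |Real.cos t| ≤ 1 := Real.abs_cos_le_one t
    rw [norm_mul, Real.norm_eq_abs, Real.abs_exp, norm_pow, Real.norm_eq_abs]
    calc Real.exp (y * Real.cos t) * |Real.cos t| ^ (n+1)
        ≤ Real.exp (|x| + 1) * 1 := by
          apply mul_le_mul
          · apply Real.exp_le_exp.2
            calc y * Real.cos t ≤ |y * Real.cos t| := le_abs_self _
              _ = |y| * |Real.cos t| := abs_mul _ _
              _ ≤ (|x| + 1) * 1 := by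
                  apply mul_le_mul hyx hct (abs_nonneg _) (by positivity)
              _ = |x| + 1 := mul_one _
          · exact pow_le_one₀ (abs_nonneg _) hct
          · positivity
          · positivity
      _ = Real.exp (|x| + 1) := mul_one _
  · refine Filter.Eventually.of_forall fun t _ y _ => ?_
    have h1 : HasDerivAt (fun y : ℝ => y * Real.cos t) (Real.cos t) y := by
      simpa using (hasDerivAt_id y).mul_const (Real.cos t)
    have := (h1.exp).mul_const (Real.cos t ^ n)
    refine this.congr_deriv ?_
    ring

lemma besselAux_ode (x : ℝ) :
    x ^ 2 * besselAux 3 x + x * besselAux 2 x - (x ^ 2 + 1) * besselAux 1 x = 0 := by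
  have hint : ∀ n : ℕ, IntervalIntegrable
      (fun τ => Real.exp (x * Real.cos τ) * Real.cos τ ^ n) volume 0 π :=
    fun n => ((besselAux_cont n x)).intervalIntegrable 0 π
  have hcomb : x ^ 2 * besselAux 3 x + x * besselAux 2 x - (x ^ 2 + 1) * besselAux 1 x
      = ∫ τ in (0:ℝ)..π, (x ^ 2 * (Real.exp (x * Real.cos τ) * Real.cos τ ^ 3)
          + x * (Real.exp (x * Real.cos τ) * Real.cos τ ^ 2)
          - (x ^ 2 + 1) * (Real.exp (x * Real.cos τ) * Real.cos τ ^ 1)) := by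
    rw [intervalIntegral.integral_sub (((hint 3).const_mul _).add ((hint 2).const_mul _)) ((hint 1).const_mul _),
      intervalIntegral.integral_add ((hint 3).const_mul _) ((hint 2).const_mul _),
      intervalIntegral.integral_const_mul, intervalIntegral.integral_const_mul,
      intervalIntegral.integral_const_mul]
    rfl
  rw [hcomb]
  have hF : ∀ τ ∈ Set.uIcc (0:ℝ) π, HasDerivAt
      (fun τ => Real.exp (x * Real.cos τ) * (x * Real.sin τ * Real.cos τ - Real.sin τ))
      (x ^ 2 * (Real.exp (x * Real.cos τ) * Real.cos τ ^ 3)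
        + x * (Real.exp (x * Real.cos τ) * Real.cos τ ^ 2)
        - (x ^ 2 + 1) * (Real.exp (x * Real.cos τ) * Real.cos τ ^ 1)) τ := by
    intro τ _
    have h1 : HasDerivAt (fun τ : ℝ => x * Real.cos τ) (x * (-Real.sin τ)) τ :=
      (Real.hasDerivAt_cos τ).const_mul x
    have h2 : HasDerivAt (fun τ : ℝ => x * Real.sin τ * Real.cos τ - Real.sin τ)
        (x * Real.cos τ * Real.cos τ + x * Real.sin τ * (-Real.sin τ) - Real.cos τ) τ := by
      exact (((Real.hasDerivAt_sin τ).const_mul x).mul (Real.hasDerivAt_cos τ)).sub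
        (Real.hasDerivAt_sin τ)
    have := (h1.exp).mul h2
    refine this.congr_deriv ?_
    have hs : Real.sin τ ^ 2 = 1 - Real.cos τ ^ 2 := Real.sin_sq τ
    linear_combination (-(x ^ 2 * Real.cos τ * Real.exp (x * Real.cos τ))) * hs
  have hintc : IntervalIntegrable (fun τ =>
      x ^ 2 * (Real.exp (x * Real.cos τ) * Real.cos τ ^ 3)
        + x * (Real.exp (x * Real.cos τ) * Real.cos τ ^ 2)
        - (x ^ 2 + 1) * (Real.exp (x * Real.cos τ) * Real.cos τ ^ 1)) volume 0 π :=
    (((hint 3).const_mul _).add ((hint 2).const_mul _)).sub ((hint 1).const_mul _)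
  rw [intervalIntegral.integral_eq_sub_of_hasDerivAt hF hintc]
  simp

lemma besselI1_eq_s8 : besselI1 = besselAux 1 := by
  funext x; simp [besselI1, besselAux]

section main
variable (k Lc A : ℝ)

def G0 (s : ℝ) : ℝ := 1 + A * besselAux 1 (k * s / Lc) / s
def G1 (s : ℝ) : ℝ :=
  A * (k / Lc * besselAux 2 (k * s / Lc) * s - besselAux 1 (k * s / Lc)) / s ^ 2
def G2 (s : ℝ) : ℝ :=
  A * ((k / Lc) ^ 2 * besselAux 3 (k * s / Lc) * s ^ 2
    - 2 * (k / Lc) * besselAux 2 (k * s / Lc) * s + 2 * besselAux 1 (k * s / Lc)) / s ^ 3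

variable {Lc : ℝ}

lemma inner_deriv (hLc : Lc ≠ 0) (s : ℝ) :
    HasDerivAt (fun s : ℝ => k * s / Lc) (k / Lc) s := by
  simpa using ((hasDerivAt_id s).const_mul k).div_const Lc

lemma besselComp_deriv (n : ℕ) (hLc : Lc ≠ 0) (s : ℝ) :
    HasDerivAt (fun s : ℝ => besselAux n (k * s / Lc))
      (besselAux (n+1) (k * s / Lc) * (k / Lc)) s :=
  (hasDerivAt_besselAux n (k * s / Lc)).comp (h := fun s : ℝ => k * s / Lc) s (inner_deriv k hLc s)

lemma hasDerivAt_G0 (hLc : Lc ≠ 0) {s : ℝ} (hs : s ≠ 0) :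
    HasDerivAt (G0 k Lc A) (G1 k Lc A s) s := by
  have h := (((besselComp_deriv k 1 hLc s).const_mul A).div (hasDerivAt_id s) hs).const_add 1
  refine h.congr_deriv ?_
  unfold G1
  simp only [id]
  field_simp

lemma hasDerivAt_G1 (hLc : Lc ≠ 0) {s : ℝ} (hs : s ≠ 0) :
    HasDerivAt (G1 k Lc A) (G2 k Lc A s) s := by
  have hnum := ((((besselComp_deriv k 2 hLc s).const_mul (k / Lc)).mul
      (hasDerivAt_id s)).sub (besselComp_deriv k 1 hLc s)).const_mul A
  have h := hnum.div (hasDerivAt_pow 2 s) (pow_ne_zero 2 hs)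
  refine h.congr_deriv ?_
  unfold G2
  simp only [id, Pi.mul_apply, Pi.sub_apply]
  field_simp
  ring

end main

/-- g_p(r) = 1 + A·I₁(f₁r/L_c)/r is twice differentiable on (0,∞) and solves the
Cosserat torsion equilibrium equation. -/
theorem cosserat_torsion_solution
    (μ Lc μc a₁ a₃ : ℝ) (hμ : 0 < μ) (hLc : 0 < Lc) (hμc : 0 < μc)
    (ha₁ : 0 < a₁) (ha₃ : 0 < a₃) (A : ℝ) :
    ∀ r : ℝ, 0 < r →
      DifferentiableAt ℝ
        (fun s => 1 + A * besselI1 (Real.sqrt (6 * μc / ((a₁ + 2 * a₃) * μ)) * s / Lc) / s) r ∧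
      DifferentiableAt ℝ
        (deriv (fun s =>
          1 + A * besselI1 (Real.sqrt (6 * μc / ((a₁ + 2 * a₃) * μ)) * s / Lc) / s)) r ∧
      6 * r * μc *
          ((fun s =>
            1 + A * besselI1 (Real.sqrt (6 * μc / ((a₁ + 2 * a₃) * μ)) * s / Lc) / s) r - 1)
        - μ * Lc ^ 2 * (a₁ + 2 * a₃) *
          (3 * deriv (fun s =>
              1 + A * besselI1 (Real.sqrt (6 * μc / ((a₁ + 2 * a₃) * μ)) * s / Lc) / s) r
            + r * deriv (deriv (fun s =>
              1 + A * besselI1 (Real.sqrt (6 * μc / ((a₁ + 2 * a₃) * μ)) * s / Lc) / s)) r)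
        = 0 := by
  intro r hr
  set k := Real.sqrt (6 * μc / ((a₁ + 2 * a₃) * μ)) with hk
  have hLc' : Lc ≠ 0 := ne_of_gt hLc
  have hgG0 : (fun s => 1 + A * besselI1 (k * s / Lc) / s) = G0 k Lc A := by
    funext s; simp [G0, besselI1_eq_s8]
  rw [hgG0]
  -- derivative facts
  have hd1 : ∀ s : ℝ, s ≠ 0 → deriv (G0 k Lc A) s = G1 k Lc A s :=
    fun s hs => (hasDerivAt_G0 k A hLc' hs).deriv
  have hev : deriv (G0 k Lc A) =ᶠ[nhds r] G1 k Lc A := by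
    filter_upwards [eventually_gt_nhds hr] with s hs using hd1 s (ne_of_gt hs)
  have hdd : deriv (deriv (G0 k Lc A)) r = G2 k Lc A r := by
    rw [hev.deriv_eq]
    exact (hasDerivAt_G1 k A hLc' (ne_of_gt hr)).deriv
  refine ⟨(hasDerivAt_G0 k A hLc' (ne_of_gt hr)).differentiableAt, 
    ((hasDerivAt_G1 k A hLc' (ne_of_gt hr)).differentiableAt).congr_of_eventuallyEq hev, ?_⟩
  rw [hd1 r (ne_of_gt hr), hdd]
  have hsum : a₁ + 2 * a₃ > 0 := by linarith
  have hk2 : (a₁ + 2 * a₃) * μ * k ^ 2 = 6 * μc := by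
    rw [hk, Real.sq_sqrt (by positivity)]
    field_simp
  have hode := besselAux_ode (r * k / Lc)
  field_simp at hode
  unfold G0 G1 G2
  field_simp
  linear_combination (-(A * μ * (a₁ + 2 * a₃))) * hode
    + (-(A * r ^ 2 * besselAux 1 (r * k / Lc))) * hk2
end
end

section
/- Let μ > 0, L_c > 0, a₁ > 0, μ_e > 0, μ_micro > 0 and set f₁ = √(2(μ_e+μ_micro)/(a₁μ)). Define I₁(x) = ∫₀^π e^{x cos τ} cos τ dτ. Then for every constant A ∈ ℝ, the function g_m : (0,∞) → ℝ, g_m(r) = A·I₁(f₁·r/L_c)/r − μ_e/(μ_e+μ_micro), is twice differentiable and solves the micro-strain torsion equilibrium equation a₁μL_c²(3g_m′(r) + r·g_m″(r)) − 2rμ_e(g_m(r)+1) − 2r·g_m(r)·μ_micro = 0 for every r > 0. -/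
open Real intervalIntegral

noncomputable section

def J (n : ℕ) (x : ℝ) : ℝ := ∫ τ in (0:ℝ)..π, Real.exp (x * Real.cos τ) * Real.cos τ ^ n

lemma contJ (n : ℕ) (x : ℝ) : Continuous fun τ : ℝ => Real.exp (x * Real.cos τ) * Real.cos τ ^ n := by
  continuity

lemma hasDerivAt_J (n : ℕ) (x₀ : ℝ) : HasDerivAt (J n) (J (n+1) x₀) x₀ := by
  have h := intervalIntegral.hasDerivAt_integral_of_dominated_loc_of_deriv_le
    (𝕜 := ℝ) (μ := MeasureTheory.volume) (a := 0) (b := π) (s := Metric.ball x₀ 1)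
    (F := fun x τ => Real.exp (x * Real.cos τ) * Real.cos τ ^ n)
    (F' := fun x τ => Real.exp (x * Real.cos τ) * Real.cos τ ^ (n+1))
    (x₀ := x₀) (bound := fun _ => Real.exp (|x₀| + 1))
    (Metric.ball_mem_nhds x₀ one_pos)
    (Filter.Eventually.of_forall fun x => (contJ n x).aestronglyMeasurable)
    ((contJ n x₀).intervalIntegrable _ _)
    ((contJ (n+1) x₀).aestronglyMeasurable)
    ?_ (intervalIntegrable_const) ?_
  · exact h.2
  · refine Filter.Eventually.of_forall fun τ _ x hx => ?_
    have h1 : |Real.cos τ ^ (n+1)| ≤ 1 := by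
      rw [abs_pow]
      exact pow_le_one₀ (abs_nonneg _) (abs_cos_le_one τ)
    have h2 : x * Real.cos τ ≤ |x₀| + 1 := by
      have hd : |x - x₀| < 1 := by
        have := Metric.mem_ball.1 hx; rwa [Real.dist_eq] at this
      have hb : |x * Real.cos τ| ≤ |x| := by
        rw [abs_mul]
        nlinarith [abs_cos_le_one τ, abs_nonneg x]
      have hxb : |x| < |x₀| + 1 := by
        have := abs_sub_abs_le_abs_sub x x₀
        linarith
      nlinarith [le_abs_self (x * Real.cos τ)]
    calc ‖Real.exp (x * Real.cos τ) * Real.cos τ ^ (n+1)‖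
        = Real.exp (x * Real.cos τ) * |Real.cos τ ^ (n+1)| := by
          rw [norm_mul, Real.norm_eq_abs, Real.norm_eq_abs, abs_exp]
      _ ≤ Real.exp (|x₀| + 1) * 1 := by
          exact mul_le_mul (Real.exp_le_exp.2 h2) h1 (abs_nonneg _) (Real.exp_pos _).le
      _ = Real.exp (|x₀| + 1) := mul_one _
  · refine Filter.Eventually.of_forall fun τ _ x hx => ?_
    have h := (((hasDerivAt_id x).mul_const (Real.cos τ)).exp).mul_const (Real.cos τ ^ n)
    refine h.congr_deriv (Eq.symm ?_)
    simp [pow_succ]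
    ring

lemma bessel_identity (x : ℝ) :
    x^2 * J 3 x + x * J 2 x - (x^2 + 1) * J 1 x = 0 := by
  have hint : ∀ m : ℕ, IntervalIntegrable
      (fun τ => Real.exp (x * Real.cos τ) * Real.cos τ ^ m) MeasureTheory.volume 0 π :=
    fun m => (contJ m x).intervalIntegrable _ _
  have key : ∫ τ in (0:ℝ)..π,
      (x^2 * (Real.exp (x * Real.cos τ) * Real.cos τ ^ 3)
        + x * (Real.exp (x * Real.cos τ) * Real.cos τ ^ 2)
        - (x^2 + 1) * (Real.exp (x * Real.cos τ) * Real.cos τ ^ 1)) = 0 := by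
    have := intervalIntegral.integral_eq_sub_of_hasDerivAt
      (f := fun τ => Real.exp (x * Real.cos τ) * (x * Real.sin τ * Real.cos τ - Real.sin τ))
      (f' := fun τ => x^2 * (Real.exp (x * Real.cos τ) * Real.cos τ ^ 3)
        + x * (Real.exp (x * Real.cos τ) * Real.cos τ ^ 2)
        - (x^2 + 1) * (Real.exp (x * Real.cos τ) * Real.cos τ ^ 1))
      (a := 0) (b := π) ?_ ?_
    · rw [this]; simp
    · intro τ _
      have h1 : HasDerivAt (fun τ => Real.exp (x * Real.cos τ))
          (Real.exp (x * Real.cos τ) * (x * (-Real.sin τ))) τ :=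
        ((Real.hasDerivAt_cos τ).const_mul x).exp
      have h2 : HasDerivAt (fun τ => x * Real.sin τ * Real.cos τ - Real.sin τ)
          (x * Real.cos τ * Real.cos τ + x * Real.sin τ * (-Real.sin τ) - Real.cos τ) τ :=
        (((Real.hasDerivAt_sin τ).const_mul x).mul (Real.hasDerivAt_cos τ)).sub
          (Real.hasDerivAt_sin τ)
      have h := h1.mul h2
      refine h.congr_deriv (Eq.symm ?_)
      have hs := Real.sin_sq_add_cos_sq τ
      linear_combination (Real.exp (x * Real.cos τ) * x^2 * Real.cos τ) * hs
    · exact (by continuity : Continuous fun τ : ℝ => x^2 * (Real.exp (x * Real.cos τ) * Real.cos τ ^ 3)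
        + x * (Real.exp (x * Real.cos τ) * Real.cos τ ^ 2)
        - (x^2 + 1) * (Real.exp (x * Real.cos τ) * Real.cos τ ^ 1)).intervalIntegrable _ _
  rw [J, J, J, ← intervalIntegral.integral_const_mul, ← intervalIntegral.integral_const_mul,
    ← intervalIntegral.integral_const_mul,
    ← intervalIntegral.integral_add ((hint 3).const_mul _) ((hint 2).const_mul _),
    ← intervalIntegral.integral_sub (((hint 3).const_mul _).add ((hint 2).const_mul _))
      ((hint 1).const_mul _)]
  exact key

lemma besselI1_eq_s9 (x : ℝ) : besselI1 x = J 1 x := by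
  unfold besselI1 J; simp [pow_one]

/-- g_m(r) = A·I₁(f₁r/L_c)/r − μ_e/(μ_e+μ_micro) is twice differentiable on (0,∞)
and solves the micro-strain torsion equilibrium equation. -/
theorem microstrain_torsion_solution
    (μ Lc a₁ μe μmicro : ℝ) (hμ : 0 < μ) (hLc : 0 < Lc) (ha₁ : 0 < a₁)
    (hμe : 0 < μe) (hμmicro : 0 < μmicro) (A : ℝ) :
    ∀ r : ℝ, 0 < r →
      DifferentiableAt ℝ
        (fun s => A * besselI1 (Real.sqrt (2 * (μe + μmicro) / (a₁ * μ)) * s / Lc) / s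
          - μe / (μe + μmicro)) r ∧
      DifferentiableAt ℝ
        (deriv (fun s => A * besselI1 (Real.sqrt (2 * (μe + μmicro) / (a₁ * μ)) * s / Lc) / s
          - μe / (μe + μmicro))) r ∧
      a₁ * μ * Lc ^ 2 *
          (3 * deriv (fun s =>
              A * besselI1 (Real.sqrt (2 * (μe + μmicro) / (a₁ * μ)) * s / Lc) / s
                - μe / (μe + μmicro)) r
            + r * deriv (deriv (fun s =>
              A * besselI1 (Real.sqrt (2 * (μe + μmicro) / (a₁ * μ)) * s / Lc) / s
                - μe / (μe + μmicro))) r)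
        - 2 * r * μe *
            ((fun s => A * besselI1 (Real.sqrt (2 * (μe + μmicro) / (a₁ * μ)) * s / Lc) / s
              - μe / (μe + μmicro)) r + 1)
        - 2 * r * ((fun s => A * besselI1 (Real.sqrt (2 * (μe + μmicro) / (a₁ * μ)) * s / Lc) / s
              - μe / (μe + μmicro)) r) * μmicro
        = 0 := by
  intro r hr
  have hsum : 0 < μe + μmicro := by linarith
  have haμ : 0 < a₁ * μ := mul_pos ha₁ hμ
  obtain ⟨k, hk0, hk2, hfun⟩ : ∃ k : ℝ, 0 < k ∧ a₁ * μ * Lc ^ 2 * k ^ 2 = 2 * (μe + μmicro) ∧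
      (fun s => A * besselI1 (Real.sqrt (2 * (μe + μmicro) / (a₁ * μ)) * s / Lc) / s
        - μe / (μe + μmicro))
      = fun s => A * J 1 (k * s) / s - μe / (μe + μmicro) := by
    refine ⟨Real.sqrt (2 * (μe + μmicro) / (a₁ * μ)) / Lc, ?_, ?_, ?_⟩
    · have : 0 < Real.sqrt (2 * (μe + μmicro) / (a₁ * μ)) :=
        Real.sqrt_pos.2 (by positivity)
      positivity
    · have hc2 : Real.sqrt (2 * (μe + μmicro) / (a₁ * μ)) ^ 2
          = 2 * (μe + μmicro) / (a₁ * μ) := Real.sq_sqrt (by positivity)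
      rw [div_pow, hc2]
      field_simp
    · funext s
      rw [besselI1_eq_s9, show Real.sqrt (2 * (μe + μmicro) / (a₁ * μ)) * s / Lc
        = Real.sqrt (2 * (μe + μmicro) / (a₁ * μ)) / Lc * s by ring]
  rw [hfun]
  set g : ℝ → ℝ := fun s => A * J 1 (k * s) / s - μe / (μe + μmicro) with hgdef
  set φ : ℝ → ℝ := fun s => A * k * J 2 (k * s) / s - A * J 1 (k * s) / s ^ 2 with hφdef
  have hks : ∀ s : ℝ, HasDerivAt (fun s => k * s) (k * 1) s :=
    fun s => (hasDerivAt_id s).const_mul k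
  have hD1 : ∀ s : ℝ, s ≠ 0 → HasDerivAt g (φ s) s := by
    intro s hs
    have hJ1 : HasDerivAt (fun s => J 1 (k * s)) (J 2 (k * s) * (k * 1)) s :=
      (hasDerivAt_J 1 (k * s)).comp s (hks s)
    have h := ((hJ1.const_mul A).div (hasDerivAt_id s) hs).sub_const (μe / (μe + μmicro))
    refine h.congr_deriv (Eq.symm ?_)
    rw [hφdef]
    simp only [id]
    field_simp
  have hD2 : ∀ s : ℝ, s ≠ 0 → HasDerivAt φ
      (A * k ^ 2 * J 3 (k * s) / s - 2 * A * k * J 2 (k * s) / s ^ 2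
        + 2 * A * J 1 (k * s) / s ^ 3) s := by
    intro s hs
    have hJ2 : HasDerivAt (fun s => J 2 (k * s)) (J 3 (k * s) * (k * 1)) s :=
      (hasDerivAt_J 2 (k * s)).comp s (hks s)
    have hJ1 : HasDerivAt (fun s => J 1 (k * s)) (J 2 (k * s) * (k * 1)) s :=
      (hasDerivAt_J 1 (k * s)).comp s (hks s)
    have h1 := (hJ2.const_mul (A * k)).div (hasDerivAt_id s) hs
    have h2 := (hJ1.const_mul A).div (hasDerivAt_pow 2 s) (pow_ne_zero 2 hs)
    have h := h1.sub h2
    refine h.congr_deriv (Eq.symm ?_)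
    simp only [id]
    field_simp
    ring
  have hdg : ∀ s : ℝ, s ≠ 0 → deriv g s = φ s := fun s hs => (hD1 s hs).deriv
  have hev : deriv g =ᶠ[nhds r] φ := by
    filter_upwards [eventually_ne_nhds hr.ne'] with s hs using hdg s hs
  refine ⟨(hD1 r hr.ne').differentiableAt, ?_, ?_⟩
  · exact (hD2 r hr.ne').differentiableAt.congr_of_eventuallyEq hev
  · rw [hdg r hr.ne', hev.deriv_eq, (hD2 r hr.ne').deriv]
    have hB := bessel_identity (k * r)
    have key : 3 * φ r + r * (A * k ^ 2 * J 3 (k * r) / r - 2 * A * k * J 2 (k * r) / r ^ 2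
        + 2 * A * J 1 (k * r) / r ^ 3) = A * k ^ 2 * J 1 (k * r) := by
      rw [hφdef]
      field_simp
      linear_combination A * hB
    rw [key, hgdef]
    simp only
    field_simp
    linear_combination (A * J 1 (k * r) * (μe + μmicro)) * hk2
end
end

section
/- (Correspondence of Cosserat curvature energies) Let a₁, a₂, a₃ ∈ ℝ. For every 3×3 real matrix B, setting K = tr(B)·𝟙 − Bᵀ (the Nye transform of B), one has a₁·‖dev sym K‖² + a₂·‖skew K‖² + (a₃/3)·tr²(K) = ((4a₃ − a₁)/3)·tr²(B) + ((a₁ − a₂)/2)·⟨Bᵀ, B⟩ + ((a₁ + a₂)/2)·‖B‖², where ⟨·,·⟩ is the Frobenius inner product and ‖·‖ the Frobenius norm. (With B = Dφ, φ = axl A, this converts the dislocation-format curvature energy in Curl A into the classical format in Dφ with α = (μL_c²/2)(4a₃−a₁)/3, β = (μL_c²/2)(a₁−a₂)/2, γ = (μL_c²/2)(a₁+a₂)/2.) -/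
open Matrix

noncomputable section

set_option maxHeartbeats 2000000 in
/-- correspondence of Cosserat curvature energies under the Nye transform
K = tr(B)·𝟙 − Bᵀ. -/
theorem cosserat_curvature_correspondence (a₁ a₂ a₃ : ℝ) (B : Mat3) :
    a₁ * frob2 (dev3 (symm3 (Matrix.trace B • (1 : Mat3) - Bᵀ)))
      + a₂ * frob2 (skew3 (Matrix.trace B • (1 : Mat3) - Bᵀ))
      + a₃ / 3 * (Matrix.trace (Matrix.trace B • (1 : Mat3) - Bᵀ)) ^ 2
    = (4 * a₃ - a₁) / 3 * (Matrix.trace B) ^ 2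
      + (a₁ - a₂) / 2 * frobInner Bᵀ B
      + (a₁ + a₂) / 2 * frob2 B := by
  simp only [frob2, frobInner, dev3, symm3, skew3, Matrix.trace, Matrix.diag,
    Fin.sum_univ_three, Matrix.sub_apply, Matrix.smul_apply, Matrix.add_apply,
    Matrix.transpose_apply, Matrix.one_apply, smul_eq_mul]
  norm_num [Fin.ext_iff]
  ring
end
end

section
/- Let μ_e, μ_c, μ_micro, κ_e, κ_micro > 0 and let G be any 3×3 real matrix. Define f : ℝ^{3×3} → ℝ by f(P) = μ_e·‖dev sym(G − P)‖² + (κ_e/2)·tr²(G − P) + μ_c·‖skew(G − P)‖² + μ_micro·‖dev sym P‖² + (κ_micro/2)·tr²(P). Then f has a unique global minimizer P*, characterized by dev sym P* = (μ_e/(μ_e + μ_micro))·dev sym G, skew P* = skew G, and tr P* = (κ_e/(κ_e + κ_micro))·tr G; moreover f(P) > f(P*) for every P ≠ P*. -/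
open Matrix

noncomputable section

/-- The micromorphic lower-order energy as a function of the micro-distortion P,
with fixed displacement gradient G. -/
def microEnergy (μe μc μmicro κe κmicro : ℝ) (G P : Mat3) : ℝ :=
  μe * frob2 (dev3 (symm3 (G - P))) + κe / 2 * (Matrix.trace (G - P)) ^ 2
    + μc * frob2 (skew3 (G - P))
    + μmicro * frob2 (dev3 (symm3 P)) + κmicro / 2 * (Matrix.trace P) ^ 2

/-! ### Auxiliary lemmas -/

def ip3 (X Y : Mat3) : ℝ := ∑ i, ∑ j, X i j * Y i j

lemma ip3_comm (X Y : Mat3) : ip3 X Y = ip3 Y X := by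
  simp [ip3, Fin.sum_univ_three]; ring

lemma ip3_self (X : Mat3) : ip3 X X = frob2 X := by
  simp [ip3, frob2, Fin.sum_univ_three]; ring

lemma frob2_sub (X Y : Mat3) : frob2 (X - Y) = frob2 X - 2 * ip3 X Y + frob2 Y := by
  simp [frob2, ip3, Fin.sum_univ_three, Matrix.sub_apply]; ring

lemma frob2_smul (c : ℝ) (X : Mat3) : frob2 (c • X) = c^2 * frob2 X := by
  simp [frob2, Fin.sum_univ_three, Matrix.smul_apply, smul_eq_mul]; ring

lemma ip3_smul_right (c : ℝ) (X Y : Mat3) : ip3 X (c • Y) = c * ip3 X Y := by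
  simp [ip3, Fin.sum_univ_three, Matrix.smul_apply, smul_eq_mul]; ring

lemma frob2_nonneg (X : Mat3) : 0 ≤ frob2 X :=
  Finset.sum_nonneg fun _ _ => Finset.sum_nonneg fun _ _ => sq_nonneg _

lemma frob2_pos {X : Mat3} (h : X ≠ 0) : 0 < frob2 X := by
  have hex : ∃ i j, X i j ≠ 0 := by
    by_contra hc
    push_neg at hc
    exact h (by ext i j; simpa using hc i j)
  obtain ⟨i, j, hij⟩ := hex
  have h1 : (X i j)^2 ≤ ∑ j', (X i j')^2 :=
    Finset.single_le_sum (f := fun j' => (X i j')^2) (fun _ _ => sq_nonneg _) (Finset.mem_univ j)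
  have h2 : (∑ j', (X i j')^2) ≤ ∑ i', ∑ j', (X i' j')^2 :=
    Finset.single_le_sum (f := fun i' => ∑ j', (X i' j')^2)
      (fun _ _ => Finset.sum_nonneg fun _ _ => sq_nonneg _) (Finset.mem_univ i)
  have h3 : 0 < (X i j)^2 := by positivity
  exact lt_of_lt_of_le h3 (le_trans h1 h2)

lemma frob2_eq_zero {X : Mat3} (h : frob2 X = 0) : X = 0 := by
  by_contra hX
  exact absurd h (ne_of_gt (frob2_pos hX))

lemma devsym_sub (A B : Mat3) :
    dev3 (symm3 (A - B)) = dev3 (symm3 A) - dev3 (symm3 B) := by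
  ext i j
  fin_cases i <;> fin_cases j <;>
    simp [dev3, symm3, Matrix.trace, Matrix.diag, Fin.sum_univ_three, Matrix.one_apply,
      Matrix.sub_apply, Matrix.add_apply, Matrix.smul_apply, Matrix.transpose_apply,
      smul_eq_mul] <;> ring

lemma skew3_sub' (A B : Mat3) : skew3 (A - B) = skew3 A - skew3 B := by
  ext i j
  simp [skew3, Matrix.sub_apply, Matrix.smul_apply, Matrix.transpose_apply, smul_eq_mul]
  ring

lemma decomp3 (X : Mat3) :
    X = dev3 (symm3 X) + skew3 X + (Matrix.trace X / 3) • (1 : Mat3) := by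
  ext i j
  fin_cases i <;> fin_cases j <;>
    simp [dev3, symm3, skew3, Matrix.trace, Matrix.diag, Fin.sum_univ_three, Matrix.one_apply,
      Matrix.sub_apply, Matrix.add_apply, Matrix.smul_apply, Matrix.transpose_apply,
      smul_eq_mul] <;> ring

lemma trace_symm3 (X : Mat3) : Matrix.trace (symm3 X) = Matrix.trace X := by
  simp [symm3, Matrix.trace_add, Matrix.trace_smul, Matrix.trace_transpose, smul_eq_mul]
  ring

lemma trace_skew3 (X : Mat3) : Matrix.trace (skew3 X) = 0 := by
  simp [skew3, Matrix.trace_sub, Matrix.trace_transpose]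

lemma trace_dev3 (X : Mat3) : Matrix.trace (dev3 X) = 0 := by
  simp [dev3, Matrix.trace_sub, Matrix.trace_smul, Matrix.trace_one, smul_eq_mul]

lemma symm3_transpose (X : Mat3) : (symm3 X)ᵀ = symm3 X := by
  simp [symm3, Matrix.transpose_add, Matrix.transpose_smul]; module

lemma dev3_transpose (X : Mat3) : (dev3 X)ᵀ = dev3 Xᵀ := by
  simp [dev3, Matrix.transpose_sub, Matrix.transpose_smul, Matrix.trace_transpose]

lemma skew3_transpose (X : Mat3) : (skew3 X)ᵀ = -(skew3 X) := by
  simp [skew3, Matrix.transpose_sub, Matrix.transpose_smul]; module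

lemma symm3_of_symm {X : Mat3} (h : Xᵀ = X) : symm3 X = X := by
  rw [symm3, h]; module

lemma skew3_of_symm {X : Mat3} (h : Xᵀ = X) : skew3 X = 0 := by
  rw [skew3, h]; simp

lemma symm3_of_skew3 (X : Mat3) : symm3 (skew3 X) = 0 := by
  rw [symm3, skew3_transpose]; simp

lemma skew3_of_skew3 (X : Mat3) : skew3 (skew3 X) = skew3 X := by
  rw [skew3, skew3_transpose]; module

lemma devsym_transpose (X : Mat3) : (dev3 (symm3 X))ᵀ = dev3 (symm3 X) := by
  rw [dev3_transpose, symm3_transpose]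

lemma dev3_of_trace_zero {X : Mat3} (h : Matrix.trace X = 0) : dev3 X = X := by
  simp [dev3, h]

lemma symm3_add (A B : Mat3) : symm3 (A + B) = symm3 A + symm3 B := by
  simp [symm3, Matrix.transpose_add]; module

lemma symm3_smul (c : ℝ) (A : Mat3) : symm3 (c • A) = c • symm3 A := by
  simp [symm3, Matrix.transpose_smul]; module

lemma skew3_add (A B : Mat3) : skew3 (A + B) = skew3 A + skew3 B := by
  simp [skew3, Matrix.transpose_add]; module

lemma skew3_smul (c : ℝ) (A : Mat3) : skew3 (c • A) = c • skew3 A := by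
  simp [skew3, Matrix.transpose_smul]; module

lemma dev3_add (A B : Mat3) : dev3 (A + B) = dev3 A + dev3 B := by
  simp [dev3, Matrix.trace_add]; module

lemma dev3_smul (c : ℝ) (A : Mat3) : dev3 (c • A) = c • dev3 A := by
  simp [dev3, Matrix.trace_smul, smul_smul, mul_div_assoc]; module

lemma dev3_smul_one (c : ℝ) : dev3 (c • (1 : Mat3)) = 0 := by
  simp [dev3, Matrix.trace_smul, Matrix.trace_one, smul_smul]

lemma star_devsym (a b : ℝ) (G : Mat3) :
    dev3 (symm3 (a • dev3 (symm3 G) + skew3 G + (b * Matrix.trace G / 3) • (1 : Mat3)))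
      = a • dev3 (symm3 G) := by
  rw [symm3_add, symm3_add, symm3_smul, symm3_of_symm (devsym_transpose G),
    symm3_of_skew3, symm3_smul, symm3_of_symm Matrix.transpose_one, add_zero,
    dev3_add, dev3_smul, dev3_of_trace_zero (trace_dev3 (symm3 G)), dev3_smul_one, add_zero]

lemma star_skew (a b : ℝ) (G : Mat3) :
    skew3 (a • dev3 (symm3 G) + skew3 G + (b * Matrix.trace G / 3) • (1 : Mat3))
      = skew3 G := by
  rw [skew3_add, skew3_add, skew3_smul, skew3_of_symm (devsym_transpose G),
    skew3_of_skew3, skew3_smul, skew3_of_symm Matrix.transpose_one]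
  simp

lemma star_trace (a b : ℝ) (G : Mat3) :
    Matrix.trace (a • dev3 (symm3 G) + skew3 G + (b * Matrix.trace G / 3) • (1 : Mat3))
      = b * Matrix.trace G := by
  simp [Matrix.trace_add, Matrix.trace_smul, trace_dev3, trace_skew3, Matrix.trace_one,
    smul_eq_mul]

lemma energy_split (μe μc μmicro κe κmicro : ℝ) (G X : Mat3) :
    microEnergy μe μc μmicro κe κmicro G X
      = μe * frob2 (dev3 (symm3 G) - dev3 (symm3 X))
        + κe / 2 * (Matrix.trace G - Matrix.trace X) ^ 2
        + μc * frob2 (skew3 G - skew3 X)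
        + μmicro * frob2 (dev3 (symm3 X)) + κmicro / 2 * (Matrix.trace X) ^ 2 := by
  rw [microEnergy, devsym_sub, skew3_sub', Matrix.trace_sub]

/-- the micromorphic lower-order energy has a unique global minimizer P*,
characterized by its deviatoric-symmetric, skew and trace parts. -/
theorem microEnergy_unique_minimizer (μe μc μmicro κe κmicro : ℝ)
    (hμe : 0 < μe) (hμc : 0 < μc) (hμmicro : 0 < μmicro)
    (hκe : 0 < κe) (hκmicro : 0 < κmicro) (G : Mat3) :
    ∃ Pstar : Mat3,
      dev3 (symm3 Pstar) = (μe / (μe + μmicro)) • dev3 (symm3 G) ∧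
      skew3 Pstar = skew3 G ∧
      Matrix.trace Pstar = κe / (κe + κmicro) * Matrix.trace G ∧
      ∀ P : Mat3, P ≠ Pstar →
        microEnergy μe μc μmicro κe κmicro G Pstar
          < microEnergy μe μc μmicro κe κmicro G P := by
  set a : ℝ := μe / (μe + μmicro) with ha
  set b : ℝ := κe / (κe + κmicro) with hb
  have hμsum : μe + μmicro ≠ 0 := by positivity
  have hκsum : κe + κmicro ≠ 0 := by positivity
  set Dg : Mat3 := dev3 (symm3 G) with hDg
  set Sg : Mat3 := skew3 G with hSg
  set tg : ℝ := Matrix.trace G with htg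
  refine ⟨a • Dg + Sg + (b * tg / 3) • (1 : Mat3),
    star_devsym a b G, star_skew a b G, star_trace a b G, ?_⟩
  intro P hP
  set Pstar : Mat3 := a • Dg + Sg + (b * tg / 3) • (1 : Mat3) with hPstar
  set D : Mat3 := dev3 (symm3 P) with hD
  set S : Mat3 := skew3 P with hS
  set t : ℝ := Matrix.trace P with ht
  have hcomm1 : ip3 D Dg = ip3 Dg D := ip3_comm D Dg
  have hcomm2 : ip3 S Sg = ip3 Sg S := ip3_comm S Sg
  have hdiff : microEnergy μe μc μmicro κe κmicro G P
      - microEnergy μe μc μmicro κe κmicro G Pstar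
      = (μe + μmicro) * frob2 (D - a • Dg) + μc * frob2 (S - Sg)
        + (κe + κmicro) / 2 * (t - b * tg) ^ 2 := by
    rw [energy_split, energy_split]
    rw [show dev3 (symm3 Pstar) = a • Dg from star_devsym a b G,
      show skew3 Pstar = Sg from star_skew a b G,
      show Matrix.trace Pstar = b * tg from star_trace a b G]
    simp only [← hD, ← hS, ← ht, ← hDg, ← hSg, ← htg]
    simp only [frob2_sub, frob2_smul, ip3_smul_right, ip3_self, hcomm1, hcomm2]
    rw [ha, hb]
    field_simp
    ring
  have hterm1 : 0 ≤ (μe + μmicro) * frob2 (D - a • Dg) :=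
    mul_nonneg (by positivity) (frob2_nonneg _)
  have hterm2 : 0 ≤ μc * frob2 (S - Sg) := mul_nonneg hμc.le (frob2_nonneg _)
  have hterm3 : 0 ≤ (κe + κmicro) / 2 * (t - b * tg) ^ 2 :=
    mul_nonneg (by positivity) (sq_nonneg _)
  have hne : ¬(D - a • Dg = 0 ∧ S - Sg = 0 ∧ t - b * tg = 0) := by
    rintro ⟨e1, e2, e3⟩
    apply hP
    rw [sub_eq_zero] at e1 e2 e3
    calc P = D + S + (t / 3) • (1 : Mat3) := by rw [hD, hS, ht]; exact decomp3 P
      _ = a • Dg + Sg + (b * tg / 3) • (1 : Mat3) := by rw [e1, e2, e3]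
      _ = Pstar := rfl
  have hpos : 0 < (μe + μmicro) * frob2 (D - a • Dg) + μc * frob2 (S - Sg)
      + (κe + κmicro) / 2 * (t - b * tg) ^ 2 := by
    by_contra hle
    push_neg at hle
    have z1 : (μe + μmicro) * frob2 (D - a • Dg) = 0 := le_antisymm (by linarith) hterm1
    have z2 : μc * frob2 (S - Sg) = 0 := le_antisymm (by linarith) hterm2
    have z3 : (κe + κmicro) / 2 * (t - b * tg) ^ 2 = 0 := le_antisymm (by linarith) hterm3
    apply hne
    refine ⟨?_, ?_, ?_⟩
    · exact frob2_eq_zero ((mul_eq_zero.mp z1).resolve_left hμsum)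
    · exact frob2_eq_zero ((mul_eq_zero.mp z2).resolve_left hμc.ne')
    · have := (mul_eq_zero.mp z3).resolve_left (by positivity)
      exact pow_eq_zero_iff (n := 2) (by norm_num) |>.mp this
  linarith [hdiff, hpos]
end
end
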